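/- If a finite simple digraph G can be made acyclic by deleting t edges, then G contains a vertex v with out-degree d^+(v) ≤ √(2t). -/

import Mathlib

/-- Out-degree of `v`: the number of out-neighbors. -/
noncomputable def outDeg {V : Type*} (Adj : V → V → Prop) (v : V) : ℕ :=
  {w | Adj v w}.ncard

/-- The set of vertices at directed distance exactly 2 from `v`. -/
def secondNbr {V : Type*} (Adj : V → V → Prop) (v : V) : Set V :=
  {w | w ≠ v ∧ ¬ Adj v w ∧ ∃ u, Adj v u ∧ Adj u w}

/-- `Adj` has a directed cycle of length `k`. -/
def HasCycleOfLength {V : Type*} (Adj : V → V → Prop) (k : ℕ) : Prop :=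
  ∃ c : Fin k → V, Function.Injective c ∧ ∀ i : Fin k, Adj (c i) (c ⟨(i.val + 1) % k, Nat.mod_lt _ i.pos⟩)

/-- `Adj` has no directed cycles. -/
def Acyclic {V : Type*} (Adj : V → V → Prop) : Prop :=
  ∀ k : ℕ, 1 ≤ k → ¬ HasCycleOfLength Adj k

/-- `Adj` is `m`-free: it has no directed cycle of length at most `m`. -/
def MFree {V : Type*} (Adj : V → V → Prop) (m : ℕ) : Prop :=
  ∀ k : ℕ, 1 ≤ k → k ≤ m → ¬ HasCycleOfLength Adj k

/-- `T` is a tournament: irreflexive and exactly one arc between distinct vertices. -/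
def IsTournament {V : Type*} (T : V → V → Prop) : Prop :=
  (∀ v, ¬ T v v) ∧ ∀ a b : V, a ≠ b → (T a b ↔ ¬ T b a)

/-- The number of arcs of `T` that are missing in `Adj`. -/
noncomputable def deletedCount {V : Type*} (T Adj : V → V → Prop) : ℕ :=
  {p : V × V | T p.1 p.2 ∧ ¬ Adj p.1 p.2}.ncard

private lemma transGen_walk {V : Type*} {r : V → V → Prop} {a b : V}
    (h : Relation.TransGen r a b) :
    ∃ m, 1 ≤ m ∧ ∃ x : ℕ → V, x 0 = a ∧ x m = b ∧ ∀ i < m, r (x i) (x (i+1)) := by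
  induction h with
  | @single b hab =>
      exact ⟨1, le_refl _, fun k => if k = 0 then a else b, by simp, by simp, by
        intro i hi; interval_cases i; simpa using hab⟩
  | @tail b c hab hbc ih =>
      obtain ⟨m, hm, x, hx0, hxm, hstep⟩ := ih
      refine ⟨m+1, by omega, fun k => if k ≤ m then x k else c, by simpa using hx0, by simp, ?_⟩
      intro i hi
      rcases Nat.lt_or_ge i m with hlt | hge
      · simpa [Nat.le_of_lt hlt, Nat.succ_le_of_lt hlt] using hstep i hlt
      · have : i = m := by omega
        subst this
        simpa [hxm] using hbc

private lemma acyclic_irrefl {V : Type*} {r : V → V → Prop} (h : Acyclic r) (v : V) :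
    ¬ Relation.TransGen r v v := by
  classical
  intro hv
  obtain ⟨m, hm, x, hx0, hxm, hstep⟩ := transGen_walk hv
  have hex : ∃ n, 1 ≤ n ∧ ∃ y : ℕ → V, y n = y 0 ∧ ∀ i < n, r (y i) (y (i+1)) :=
    ⟨m, hm, x, by rw [hxm, hx0], hstep⟩
  obtain ⟨hm0, y, hcl, hst⟩ := Nat.find_spec hex
  set m0 := Nat.find hex with hm0def
  have key : ∀ i j : ℕ, i < j → j < m0 → y i ≠ y j := by
    intro i j hij hj hy
    have hP : 1 ≤ j - i ∧ ∃ z : ℕ → V, z (j - i) = z 0 ∧ ∀ k < j - i, r (z k) (z (k+1)) := by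
      refine ⟨by omega, fun k => y (i + k), ?_, ?_⟩
      · simp only [Nat.add_zero]
        rw [show i + (j - i) = j by omega]; exact hy.symm
      · intro k hk
        have := hst (i + k) (by omega)
        simpa [Nat.add_assoc] using this
    exact Nat.find_min hex (by omega : j - i < m0) hP
  refine h m0 hm0 ⟨fun i => y i.val, ?_, ?_⟩
  · intro i j hij
    by_contra hne
    rcases Nat.lt_or_ge i.val j.val with hlt | hge
    · exact key i.val j.val hlt j.isLt hij
    · have hlt : j.val < i.val := by
        rcases Nat.lt_or_ge j.val i.val with h' | h'
        · exact h'
        · exact absurd (Fin.ext (by omega)) hne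
      exact key j.val i.val hlt i.isLt hij.symm
  · intro i
    rcases Nat.lt_or_ge (i.val + 1) m0 with hlt | hge
    · simpa [Nat.mod_eq_of_lt hlt] using hst i.val (by omega)
    · have heq : i.val + 1 = m0 := by omega
      have : (i.val + 1) % m0 = 0 := by rw [heq]; exact Nat.mod_self m0
      simp only [this]
      have := hst i.val (by omega)
      rw [heq, hcl] at this
      exact this

open Finset in
theorem hamburger_et_al {V : Type*} [Fintype V] [Nonempty V]
    (Adj : V → V → Prop) (hsimple : ∀ v, ¬ Adj v v)
    (t : ℕ) (Adj' : V → V → Prop)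
    (hsub : ∀ a b, Adj' a b → Adj a b)
    (hcount : deletedCount Adj Adj' = t)
    (hacyc : Acyclic Adj') :
    ∃ v : V, (outDeg Adj v : ℝ) ≤ Real.sqrt (2 * t) := by
  have hirr : ∀ v : V, ¬ Relation.TransGen Adj' v v := acyclic_irrefl hacyc
  classical
  -- linear extension
  let rle : V → V → Prop := Relation.ReflTransGen Adj'
  haveI : IsRefl V rle := ⟨fun a => Relation.ReflTransGen.refl⟩
  haveI : IsTrans V rle := ⟨fun a b c => Relation.ReflTransGen.trans⟩
  haveI : IsAntisymm V rle := ⟨by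
    intro a b hab hba
    rcases Relation.reflTransGen_iff_eq_or_transGen.mp hab with h | h1
    · exact h.symm
    rcases Relation.reflTransGen_iff_eq_or_transGen.mp hba with h | h2
    · exact h
    exact absurd (h1.trans h2) (hirr a)⟩
  haveI : IsPartialOrder V rle := { }
  obtain ⟨s, hs, hrs⟩ := extend_partialOrder rle
  haveI := hs
  letI : LinearOrder V :=
    { le := s
      le_refl := fun a => Std.Refl.refl a
      le_trans := fun a b c => IsTrans.trans a b c
      le_antisymm := fun a b => Std.Antisymm.antisymm a b
      le_total := fun a b => Std.Total.total a b
      toDecidableLE := fun a b => Classical.propDecidable _ }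
  have hAdj'_lt : ∀ a b : V, Adj' a b → a < b := by
    intro a b hab
    have hle : a ≤ b := hrs _ _ (Relation.ReflTransGen.single hab)
    have hne : a ≠ b := by rintro rfl; exact hirr a (Relation.TransGen.single hab)
    exact lt_of_le_of_ne hle hne
  set n := Fintype.card V with hn
  have hn0 : 0 < n := Fintype.card_pos
  let e : Fin n ≃o V := monoEquivOfFin V hn.symm
  -- deleted set as finset
  let D : Finset (V × V) := univ.filter (fun p => Adj p.1 p.2 ∧ ¬ Adj' p.1 p.2)
  have hD : D.card = t := by
    rw [← hcount, deletedCount, Set.ncard_eq_toFinset_card']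
    congr 1; ext p; simp [D]
  have houtdeg : ∀ v : V, (univ.filter (fun w => Adj v w)).card = outDeg Adj v := by
    intro v; rw [outDeg, Set.ncard_eq_toFinset_card']
    congr 1; ext w; simp
  -- minimizer
  obtain ⟨v0, -, hv0⟩ := Finset.exists_min_image univ (outDeg Adj) univ_nonempty
  set d := outDeg Adj v0 with hd
  have hdle : ∀ v : V, d ≤ outDeg Adj v := fun v => hv0 v (mem_univ v)
  have hdn : d + 1 ≤ n := by
    have h1 : (univ.filter (fun w => Adj v0 w)).card ≤ (univ.erase v0).card := by
      apply card_le_card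
      intro w hw
      simp only [mem_filter, mem_univ, true_and] at hw
      simp only [mem_erase, mem_univ, and_true]
      rintro rfl; exact hsimple _ hw
    rw [houtdeg, card_erase_of_mem (mem_univ v0), card_univ] at h1
    omega
  -- fiberwise count
  have hsumV : ∑ v : V, (D.filter (fun p => p.1 = v)).card = t := by
    rw [← hD]
    exact (Finset.card_eq_sum_card_fiberwise (fun p _ => mem_univ p.1)).symm
  have hfiber : ∀ i : Fin n, d - (n - 1 - i.val) ≤ (D.filter (fun p => p.1 = e i)).card := by
    intro i
    set v := e i with hv
    set N := univ.filter (fun w => Adj v w) with hN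
    have hsplit := card_filter_add_card_filter_not (s := N) (p := fun w => w ≤ v)
    have hNd : d ≤ N.card := by rw [hN, houtdeg]; exact hdle v
    have hhigh : (N.filter (fun w => ¬ w ≤ v)).card ≤ n - 1 - i.val := by
      have hsub2 : (N.filter (fun w => ¬ w ≤ v)).image e.symm ⊆ Finset.Ioi i := by
        intro j hj
        simp only [mem_image, mem_filter] at hj
        obtain ⟨w, ⟨-, hwv⟩, rfl⟩ := hj
        simp only [Finset.mem_Ioi]
        have : v < w := lt_of_not_ge hwv
        have := (OrderIso.symm e).lt_iff_lt.mpr this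
        rwa [hv, OrderIso.symm_apply_apply] at this
      calc (N.filter (fun w => ¬ w ≤ v)).card
          = ((N.filter (fun w => ¬ w ≤ v)).image e.symm).card :=
            (card_image_of_injective _ e.symm.injective).symm
        _ ≤ (Finset.Ioi i).card := card_le_card hsub2
        _ = n - 1 - i.val := by rw [Fin.card_Ioi]
    have hlow : (N.filter (fun w => w ≤ v)).card ≤ (D.filter (fun p => p.1 = v)).card := by
      have hinj : ((N.filter (fun w => w ≤ v)).image (fun w => (v, w))).card
          = (N.filter (fun w => w ≤ v)).card :=
        card_image_of_injective _ (fun a b h => congrArg Prod.snd h)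
      rw [← hinj]
      apply card_le_card
      intro p hp
      simp only [mem_image, mem_filter, mem_univ, true_and, hN] at hp
      obtain ⟨w, ⟨hAdjw, hwle⟩, rfl⟩ := hp
      have hnAdj' : ¬ Adj' v w := fun h => absurd hwle (not_le.mpr (hAdj'_lt _ _ h))
      simp [D, hAdjw, hnAdj']
    omega
  have hsumFin : ∑ i : Fin n, (D.filter (fun p => p.1 = e i)).card = t := by
    rw [← hsumV]
    exact Fintype.sum_equiv e.toEquiv _ _ (fun i => rfl)
  have hsum2 : ∑ i : Fin n, (d - (n - 1 - i.val)) ≤ t := by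
    rw [← hsumFin]; exact Finset.sum_le_sum (fun i _ => hfiber i)
  have hcalc : d * d ≤ 2 * t := by
    have h1 : ∑ i : Fin n, (d - (n - 1 - i.val)) = ∑ k ∈ range n, (d - (n - 1 - k)) :=
      Fin.sum_univ_eq_sum_range (fun k => d - (n - 1 - k)) n
    have h2 : ∑ k ∈ range n, (d - (n - 1 - k)) = ∑ k ∈ range n, (d - k) :=
      Finset.sum_range_reflect (fun k => d - k) n
    have h3 : ∑ k ∈ range (d + 1), (d - k) ≤ ∑ k ∈ range n, (d - k) :=
      Finset.sum_le_sum_of_subset (Finset.range_subset_range.mpr hdn)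
    have h4 : ∑ k ∈ range (d + 1), (d - k) = ∑ k ∈ range (d + 1), k := by
      have := Finset.sum_range_reflect (fun k => k) (d + 1)
      simpa using this
    have h5 := Finset.sum_range_id_mul_two (d + 1)
    -- h5 : (∑ i ∈ range (d+1), i) * 2 = (d+1) * d
    have h5' : (∑ i ∈ range (d + 1), i) * 2 = (d + 1) * d := by simpa using h5
    have hsum_t : ∑ k ∈ range (d + 1), k ≤ t := by omega
    have h6 : (d + 1) * d ≤ 2 * t := by
      calc (d + 1) * d = (∑ i ∈ range (d + 1), i) * 2 := h5'.symm
        _ ≤ t * 2 := Nat.mul_le_mul_right 2 hsum_t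
        _ = 2 * t := Nat.mul_comm _ _
    nlinarith
  refine ⟨v0, ?_⟩
  rw [Real.le_sqrt (by positivity) (by positivity)]
  have : ((d : ℝ)) ^ 2 = (d * d : ℕ) := by push_cast; ring
  rw [← hd, this]
  calc ((d * d : ℕ) : ℝ) ≤ ((2 * t : ℕ) : ℝ) := by exact_mod_cast hcalc
    _ = 2 * t := by push_cast; ring
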